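/- For any odd 2-adic integers t and t', the ℤ₂-lattices ⟨t, 4t'⟩ and ⟨t+4, 4(t'+4)⟩ are isometric. -/

import Mathlib

open scoped Matrix BigOperators

/-- The bilinear form on `ι → ℤ₂` given by a Gram matrix. -/
noncomputable def bf {ι : Type} [Fintype ι] (M : Matrix ι ι ℤ_[2]) (x y : ι → ℤ_[2]) : ℤ_[2] :=
  ∑ i, ∑ j, x i * M i j * y j

/-- Isometry of the ℤ₂-lattices presented by two Gram matrices. -/
def Isom {ι κ : Type} [Fintype ι] [Fintype κ]
    (M : Matrix ι ι ℤ_[2]) (N : Matrix κ κ ℤ_[2]) : Prop :=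
  ∃ e : (ι → ℤ_[2]) ≃ₗ[ℤ_[2]] (κ → ℤ_[2]), ∀ x y, bf N (e x) (e y) = bf M x y

lemma two_dvd_iff (x : ℤ_[2]) : (2:ℤ_[2]) ∣ x ↔ PadicInt.toZMod x = 0 := by
  have h2 : (2:ℤ_[2]) = ((2:ℕ):ℤ_[2]) := by norm_cast
  rw [h2, ← Ideal.mem_span_singleton, ← PadicInt.maximalIdeal_eq_span_p,
    ← PadicInt.ker_toZMod, RingHom.mem_ker]

lemma two_dvd_sub_one {t : ℤ_[2]} (h : ¬ (2:ℤ_[2]) ∣ t) : (2:ℤ_[2]) ∣ t - 1 := by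
  rw [two_dvd_iff] at h ⊢
  have h1 : ∀ a : ZMod 2, a ≠ 0 → a = 1 := by decide
  simp only [map_sub, map_one, h1 _ h, sub_self]

lemma two_dvd_mul_succ (s : ℤ_[2]) : (2:ℤ_[2]) ∣ s * (s + 1) := by
  by_cases h : (2:ℤ_[2]) ∣ s
  · exact h.mul_right _
  · refine Dvd.dvd.mul_left ?_ s
    obtain ⟨k, hk⟩ := two_dvd_sub_one h
    exact ⟨k + 1, by linear_combination hk⟩

lemma isUnit_of_odd {t : ℤ_[2]} (h : ¬ (2:ℤ_[2]) ∣ t) : IsUnit t := by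
  rw [PadicInt.isUnit_iff]
  have hle := t.norm_le_one
  rcases lt_or_eq_of_le hle with hlt | heq
  · exfalso; apply h
    have h2 : (2:ℤ_[2]) = ((2:ℕ):ℤ_[2]) := by norm_cast
    rw [h2]
    exact (PadicInt.norm_lt_one_iff_dvd t).mp hlt
  · exact heq

lemma isUnit_two_mul_add_one (x : ℤ_[2]) : IsUnit (2*x+1) := by
  apply isUnit_of_odd
  rintro ⟨c, hc⟩
  have h1 : (2:ℤ_[2]) ∣ 1 := ⟨c - x, by linear_combination hc⟩
  rw [two_dvd_iff] at h1
  simp at h1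

lemma exists_sq {u : ℤ_[2]} (h : (8:ℤ_[2]) ∣ (u - 1)) : ∃ r : ℤ_[2], r * r = u := by
  obtain ⟨c, hc⟩ := h
  have hn2 : ‖(2:ℤ_[2])‖ = 2⁻¹ := by
    have := @PadicInt.norm_p 2 ⟨Nat.prime_two⟩
    simpa using this
  have key : ‖(Polynomial.X ^ 2 - Polynomial.C u : Polynomial ℤ_[2]).eval 1‖ <
      ‖(Polynomial.X ^ 2 - Polynomial.C u : Polynomial ℤ_[2]).derivative.eval 1‖ ^ 2 := by
    have hd1 : (Polynomial.X ^ 2 - Polynomial.C u :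
        Polynomial ℤ_[2]).derivative.eval 1 = 2 := by
      simp
      norm_num
    have he1 : (Polynomial.X ^ 2 - Polynomial.C u : Polynomial ℤ_[2]).eval 1 = -(8 * c) := by
      simp only [Polynomial.eval_sub, Polynomial.eval_pow, Polynomial.eval_X,
        Polynomial.eval_C, one_pow]
      linear_combination -hc
    rw [hd1, he1, norm_neg, hn2]
    have h8 : (8:ℤ_[2]) = 2 ^ 3 := by norm_num
    have hle : ‖(8:ℤ_[2]) * c‖ ≤ (2:ℝ)⁻¹ ^ 3 := by
      rw [norm_mul, h8, norm_pow, hn2]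
      calc (2:ℝ)⁻¹ ^ 3 * ‖c‖ ≤ (2:ℝ)⁻¹ ^ 3 * 1 :=
            mul_le_mul_of_nonneg_left c.norm_le_one (by positivity)
        _ = (2:ℝ)⁻¹ ^ 3 := mul_one _
    calc ‖(8:ℤ_[2]) * c‖ ≤ (2:ℝ)⁻¹ ^ 3 := hle
      _ < (2:ℝ)⁻¹ ^ 2 := by norm_num
  obtain ⟨z, hz, -⟩ := hensels_lemma key
  refine ⟨z, ?_⟩
  simp only [Polynomial.coe_aeval_eq_eval, Polynomial.eval_sub, Polynomial.eval_pow, Polynomial.eval_X,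
    Polynomial.eval_C, sub_eq_zero] at hz
  rw [← hz]; ring

/-- For odd 2-adic integers t, t', the lattices ⟨t, 4t'⟩ and ⟨t+4, 4(t'+4)⟩ are
isometric. -/
theorem diag_isometric_add_four_scaled (t t' : ℤ_[2]) (ht : ¬ (2:ℤ_[2]) ∣ t)
    (ht' : ¬ (2:ℤ_[2]) ∣ t') :
    Isom !![t, 0; 0, 4 * t'] !![t + 4, 0; 0, 4 * (t' + 4)] := by
  obtain ⟨s, hs⟩ := two_dvd_sub_one ht
  obtain ⟨s', hs'⟩ := two_dvd_sub_one ht'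
  have hts : t = 2 * s + 1 := by linear_combination hs
  have hts' : t' = 2 * s' + 1 := by linear_combination hs'
  subst hts hts'
  obtain ⟨k, hk⟩ := two_dvd_mul_succ s
  -- t + 4 is a unit
  have hα : IsUnit (2*s+1 + 4) := by
    have h := isUnit_two_mul_add_one (s + 2)
    have heq : 2*s+1+4 = 2*(s+2)+1 := by ring
    rw [heq]; exact h
  obtain ⟨α', hα'⟩ := hα.exists_right_inv
  -- t * (t+4) * (t'+4) is a unit
  have hw : IsUnit ((2*s+1) * (2*s+1+4) * (2*s'+1+4)) := by
    refine (IsUnit.mul (IsUnit.mul ?_ hα) ?_)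
    · exact isUnit_two_mul_add_one s
    · have h := isUnit_two_mul_add_one (s' + 2)
      have heq : 2*s'+1+4 = 2*(s'+2)+1 := by ring
      rw [heq]; exact h
  obtain ⟨w', hw'⟩ := hw.exists_right_inv
  have hw'unit : IsUnit w' := IsUnit.of_mul_eq_one ((2*s+1) * (2*s+1+4) * (2*s'+1+4)) (by linear_combination hw')
  -- square root a  with (t+4) a² = t - 4(t'+4)
  obtain ⟨a, ha⟩ : ∃ a : ℤ_[2], a * a = α' * ((2*s+1) - 4*((2*s'+1) + 4)) := by
    apply exists_sq
    exact ⟨-(α' * (s' + 3)), by linear_combination hα'⟩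
  -- square root l  with l² t (t+4)(t'+4) = t'
  obtain ⟨l, hl⟩ : ∃ l : ℤ_[2], l * l = w' * (2*s'+1) := by
    apply exists_sq
    exact ⟨-(w' * ((2*s'+1)*k + (2*s+1)*(s+s'+1) + 2*(2*s+1))),
      by linear_combination hw' - 4*w'*(2*s'+1)*hk⟩
  have h1 : (2*s+1+4) * (a*a) = (2*s+1) - 4*((2*s'+1)+4) := by
    linear_combination ((2*s+1) - 4*((2*s'+1)+4))*hα' + (2*s+1+4)*ha
  have h2 : (l*l) * ((2*s+1)*(2*s+1+4)*(2*s'+1+4)) = (2*s'+1) := by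
    linear_combination ((2*s+1)*(2*s+1+4)*(2*s'+1+4))*hl + (2*s'+1)*hw'
  have hlunit : IsUnit l := by
    have : IsUnit (l * l) := by
      rw [hl]; exact hw'unit.mul (isUnit_two_mul_add_one s')
    exact isUnit_of_mul_isUnit_left this
  set A : Matrix (Fin 2) (Fin 2) ℤ_[2] :=
    !![a, -(l * (4 * ((2*s'+1) + 4))); 1, l * ((2*s+1) + 4) * a] with hA
  have hdet : A.det = l * (2*s+1) := by
    rw [hA, Matrix.det_fin_two_of]
    linear_combination l * h1
  have hdetunit : IsUnit A.det := by
    rw [hdet]; exact hlunit.mul (isUnit_two_mul_add_one s)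
  have hinv : Invertible A := A.invertibleOfIsUnitDet hdetunit
  refine ⟨A.toLinearEquiv' hinv, fun x y => ?_⟩
  have he : ∀ v, (A.toLinearEquiv' hinv) v = A.mulVec v := fun v => rfl
  rw [he, he]
  have e0 : ∀ v : Fin 2 → ℤ_[2],
      A.mulVec v 0 = a * v 0 + (-(l * (4 * ((2*s'+1) + 4)))) * v 1 := by
    intro v
    simp [hA, Matrix.mulVec, dotProduct, Fin.sum_univ_two, Matrix.vecHead, Matrix.vecTail]
  have e1 : ∀ v : Fin 2 → ℤ_[2],
      A.mulVec v 1 = v 0 + (l * ((2*s+1) + 4) * a) * v 1 := by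
    intro v
    simp [hA, Matrix.mulVec, dotProduct, Fin.sum_univ_two, Matrix.vecHead, Matrix.vecTail]
  simp only [bf, Fin.sum_univ_two, e0, e1, Matrix.of_apply, Matrix.cons_val',
    Matrix.cons_val_zero, Matrix.cons_val_one, Matrix.head_cons, Matrix.empty_val',
    Matrix.cons_val_fin_one, Matrix.head_fin_const, mul_zero, zero_mul, mul_one, one_mul,
    add_zero, zero_add]
  linear_combination (x 0 * y 0 + 4*((2*s'+1)+4)*((2*s+1)+4)*(l*l)*(x 1 * y 1)) * h1 + 4*(x 1 * y 1)*h2
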